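/- Let p be a prime and let t = a₁u + a₂u² + ⋯ ∈ ℤ_(p)[[u]] with a₁ a unit in ℤ_(p). Then the formal Laurent series (θt)(u)/t(u) − (1/p)·(θ(t∘u^p))(u)/t(u^p), where θ = u·d/du, is actually a formal power series all of whose coefficients lie in ℤ_(p). -/

import Mathlib

open PowerSeries Finset

/-- `x ∈ ℤ_(p)`: `x` is a rational number whose denominator is prime to `p`. -/
def PInt (p : ℕ) (x : ℚ) : Prop := ∃ a b : ℤ, ¬ (p : ℤ) ∣ b ∧ (b : ℚ) * x = (a : ℚ)

variable {p : ℕ}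


lemma pint_natCast (hp : p.Prime) (n : ℕ) : PInt p (n : ℚ) :=
  ⟨n, 1, fun h => hp.ne_one (Nat.dvd_one.mp (Int.natCast_dvd_natCast.mp (by simpa using h))), by simp⟩

lemma pint_zero (hp : p.Prime) : PInt p 0 := by simpa using pint_natCast hp 0
lemma pint_one (hp : p.Prime) : PInt p 1 := by simpa using pint_natCast hp 1

lemma intPrime (hp : p.Prime) : Prime (p : ℤ) := Nat.prime_iff_prime_int.mp hp

lemma pint_add (hp : p.Prime) {x y : ℚ} (hx : PInt p x) (hy : PInt p y) : PInt p (x + y) := by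
  obtain ⟨a1, b1, hb1, h1⟩ := hx
  obtain ⟨a2, b2, hb2, h2⟩ := hy
  refine ⟨a1 * b2 + a2 * b1, b1 * b2, fun h => ?_, ?_⟩
  · rcases (intPrime hp).dvd_mul.mp h with h | h
    exacts [hb1 h, hb2 h]
  · push_cast
    calc ((b1:ℚ) * b2) * (x + y) = (b2:ℚ) * ((b1:ℚ)*x) + (b1:ℚ) * ((b2:ℚ)*y) := by ring
    _ = (a1:ℚ) * b2 + (a2:ℚ) * b1 := by rw [h1, h2]; ring

lemma pint_mul (hp : p.Prime) {x y : ℚ} (hx : PInt p x) (hy : PInt p y) : PInt p (x * y) := by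
  obtain ⟨a1, b1, hb1, h1⟩ := hx
  obtain ⟨a2, b2, hb2, h2⟩ := hy
  refine ⟨a1 * a2, b1 * b2, fun h => ?_, ?_⟩
  · rcases (intPrime hp).dvd_mul.mp h with h | h
    exacts [hb1 h, hb2 h]
  · push_cast
    calc ((b1:ℚ) * b2) * (x * y) = ((b1:ℚ)*x) * ((b2:ℚ)*y) := by ring
    _ = (a1:ℚ) * a2 := by rw [h1, h2]

lemma pint_neg {x : ℚ} (hx : PInt p x) : PInt p (-x) := by
  obtain ⟨a, b, hb, h⟩ := hx
  exact ⟨-a, b, hb, by push_cast; rw [← h]; ring⟩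

lemma pint_sub (hp : p.Prime) {x y : ℚ} (hx : PInt p x) (hy : PInt p y) : PInt p (x - y) := by
  rw [sub_eq_add_neg]; exact pint_add hp hx (pint_neg hy)

lemma pint_sum (hp : p.Prime) {α : Type*} {s : Finset α} {f : α → ℚ}
    (h : ∀ i ∈ s, PInt p (f i)) : PInt p (∑ i ∈ s, f i) := by
  classical
  induction s using Finset.induction_on with
  | empty => simpa using pint_zero hp
  | insert _ _ hx ih =>
    rw [Finset.sum_insert hx]
    exact pint_add hp (h _ (Finset.mem_insert_self _ _))
      (ih fun i hi => h i (Finset.mem_insert_of_mem hi))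

/-- Composition of a power series with `u ↦ u^p`. -/
noncomputable def substPow (p : ℕ) (t : PowerSeries ℚ) : PowerSeries ℚ :=
  PowerSeries.mk fun n => if p ∣ n then coeff (R := ℚ) (n / p) t else 0

/-- The operator `θ = u·d/du` on power series. -/
noncomputable def theta (f : PowerSeries ℚ) : PowerSeries ℚ :=
  PowerSeries.mk fun n => (n : ℚ) * coeff (R := ℚ) n f

lemma coeff_substPow (t : PowerSeries ℚ) (n : ℕ) :
    coeff (R := ℚ) n (substPow p t) = if p ∣ n then coeff (R := ℚ) (n / p) t else 0 := by
  simp [substPow]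

lemma substPow_mul (hp : 0 < p) (a b : PowerSeries ℚ) :
    substPow p (a * b) = substPow p a * substPow p b := by
  ext n
  rw [coeff_substPow, PowerSeries.coeff_mul]
  by_cases h : p ∣ n
  · obtain ⟨m, rfl⟩ := h
    rw [if_pos ⟨m, rfl⟩, Nat.mul_div_cancel_left _ hp, PowerSeries.coeff_mul]
    have hinj : ∀ x ∈ antidiagonal m, ∀ y ∈ antidiagonal m,
        (fun x : ℕ × ℕ => (p * x.1, p * x.2)) x = (fun x : ℕ × ℕ => (p * x.1, p * x.2)) y →
        x = y := by
      intro x _ y _ hxy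
      have h1 : p * x.1 = p * y.1 := congrArg Prod.fst hxy
      have h2 : p * x.2 = p * y.2 := congrArg Prod.snd hxy
      exact Prod.ext (Nat.eq_of_mul_eq_mul_left hp h1) (Nat.eq_of_mul_eq_mul_left hp h2)
    have hsub : (antidiagonal m).image (fun x : ℕ × ℕ => (p * x.1, p * x.2)) ⊆
        antidiagonal (p * m) := by
      intro x hx
      obtain ⟨y, hy, rfl⟩ := Finset.mem_image.mp hx
      rw [Finset.HasAntidiagonal.mem_antidiagonal, ← Nat.mul_add, Finset.HasAntidiagonal.mem_antidiagonal.mp hy]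
    have hzero : ∀ x ∈ antidiagonal (p * m),
        x ∉ (antidiagonal m).image (fun x : ℕ × ℕ => (p * x.1, p * x.2)) →
        coeff (R := ℚ) x.1 (substPow p a) * coeff (R := ℚ) x.2 (substPow p b) = 0 := by
      intro x hx hnx
      obtain ⟨x1, x2⟩ := x
      rw [coeff_substPow, coeff_substPow]
      split_ifs with h1 h2
      · exfalso
        obtain ⟨i, rfl⟩ := h1
        obtain ⟨j, rfl⟩ := h2
        refine hnx (Finset.mem_image.mpr ⟨(i, j), Finset.HasAntidiagonal.mem_antidiagonal.mpr ?_, rfl⟩)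
        have := Finset.HasAntidiagonal.mem_antidiagonal.mp hx
        rw [← Nat.mul_add] at this
        exact Nat.eq_of_mul_eq_mul_left hp this
      all_goals ring
    rw [← Finset.sum_subset hsub hzero, Finset.sum_image hinj]
    refine Finset.sum_congr rfl fun x hx => ?_
    rw [coeff_substPow, coeff_substPow, if_pos ⟨x.1, rfl⟩, if_pos ⟨x.2, rfl⟩,
      Nat.mul_div_cancel_left _ hp, Nat.mul_div_cancel_left _ hp]
  · rw [if_neg h, PowerSeries.coeff_mul]
    refine (Finset.sum_eq_zero fun x hx => ?_).symm
    rw [coeff_substPow, coeff_substPow]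
    split_ifs with h1 h2
    · exact absurd (Finset.HasAntidiagonal.mem_antidiagonal.mp hx ▸ Nat.dvd_add h1 h2) h
    all_goals ring

lemma theta_substPow (hp : 0 < p) (t : PowerSeries ℚ) :
    theta (substPow p t) = (C (R := ℚ) p) * substPow p (theta t) := by
  ext n
  rw [coeff_C_mul]
  simp only [theta, coeff_substPow, coeff_mk]
  by_cases h : p ∣ n
  · rw [if_pos h, if_pos h]
    obtain ⟨m, rfl⟩ := h
    rw [Nat.mul_div_cancel_left _ hp]
    push_cast
    ring
  · rw [if_neg h, if_neg h]
    ring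

/-- for `t = a₁u + a₂u² + ⋯ ∈ ℤ_(p)[[u]]` with `a₁` a unit in `ℤ_(p)`,
the Laurent series `θt/t − (1/p)·θ(t∘u^p)/(t∘u^p)` is a power series `h` with all
coefficients in `ℤ_(p)`.  (The quotient identity is stated multiplied through by
`p·t·t(u^p)`, which are nonzerodivisors.) -/
theorem log_derivative_integrality (p : ℕ) (hp : p.Prime) (t : PowerSeries ℚ)
    (ht : ∀ n : ℕ, PInt p (coeff (R := ℚ) n t)) (ht0 : constantCoeff (R := ℚ) t = 0)
    (ha1 : PInt p (coeff (R := ℚ) 1 t) ∧ ∃ y : ℚ, PInt p y ∧ coeff (R := ℚ) 1 t * y = 1) :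
    ∃ h : PowerSeries ℚ, (∀ n : ℕ, PInt p (coeff (R := ℚ) n h)) ∧
      (C (R := ℚ) p) * theta t * substPow p t - theta (substPow p t) * t =
        (C (R := ℚ) p) * h * (t * substPow p t) := by
  obtain ⟨-, y, hy, hy1⟩ := ha1
  set v : PowerSeries ℚ := PowerSeries.mk fun n => coeff (R := ℚ) (n + 1) t with hv
  set w : PowerSeries ℚ := PowerSeries.mk fun n => ((n : ℚ) + 1) * coeff (R := ℚ) (n + 1) t with hw
  have htv : t = X * v := by
    ext n
    cases n with
    | zero => simp [coeff_zero_eq_constantCoeff, ht0]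
    | succ n => rw [coeff_succ_X_mul, hv, coeff_mk]
  have hthw : theta t = X * w := by
    ext n
    cases n with
    | zero => simp [theta]
    | succ n => rw [coeff_succ_X_mul, hw, coeff_mk]; simp [theta]
  have hcv : constantCoeff (R := ℚ) v = coeff (R := ℚ) 1 t := by
    rw [← coeff_zero_eq_constantCoeff, hv, coeff_mk]
  have hv0 : constantCoeff (R := ℚ) v ≠ 0 := by
    rw [hcv]; intro h0; rw [h0, zero_mul] at hy1; exact zero_ne_one hy1
  have hcvinv : PInt p (constantCoeff (R := ℚ) v)⁻¹ := by
    rw [hcv, inv_eq_of_mul_eq_one_right hy1]; exact hy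
  set f : PowerSeries ℚ := w * v⁻¹ with hf
  have hft : f * t = theta t := by
    rw [hthw, hf, htv]
    calc w * v⁻¹ * (X * v) = X * w * (v⁻¹ * v) := by ring
    _ = X * w := by rw [PowerSeries.inv_mul_cancel v hv0, mul_one]
  -- integrality
  have hPw : ∀ n : ℕ, PInt p (coeff (R := ℚ) n w) := by
    intro n
    rw [hw, coeff_mk]
    have : ((n : ℚ) + 1) = ((n + 1 : ℕ) : ℚ) := by push_cast; ring
    rw [this]
    exact pint_mul hp (pint_natCast hp _) (ht _)
  have hPvinv : ∀ n : ℕ, PInt p (coeff (R := ℚ) n v⁻¹) := by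
    intro n
    induction n using Nat.strong_induction_on with
    | _ n ih =>
      rw [PowerSeries.coeff_inv]
      split_ifs with h0
      · exact hcvinv
      · refine pint_mul hp (pint_neg hcvinv) (pint_sum hp fun x hx => ?_)
        split_ifs with hlt
        · refine pint_mul hp ?_ (ih x.2 hlt)
          rw [hv, coeff_mk]; exact ht _
        · exact pint_zero hp
  have hPf : ∀ n : ℕ, PInt p (coeff (R := ℚ) n f) := by
    intro n
    rw [hf, PowerSeries.coeff_mul]
    exact pint_sum hp fun x _ => pint_mul hp (hPw x.1) (hPvinv x.2)
  refine ⟨f - substPow p f, fun n => ?_, ?_⟩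
  · rw [map_sub, coeff_substPow]
    refine pint_sub hp (hPf n) ?_
    split_ifs
    · exact hPf _
    · exact pint_zero hp
  · rw [theta_substPow hp.pos, ← hft, substPow_mul hp.pos f t]
    ring
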